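/- Let C be an N×q complex matrix and let s be a natural number. Then the minimum of Tr[(I_q + C^H P C)^{-1}] over all N×N orthogonal projections P (P^H = P, P^2 = P) of rank at most s equals max(q − s, 0) + Σ_{k=1}^{min(s,q)} 1/(1 + λ_k(C^H C)). In particular, increasing s beyond q yields no further reduction of the minimum MSE. -/

import Mathlib

open Matrix

section Helpers

lemma star_dot_eq_sum {q : ℕ} (v : Fin q → ℂ) :
    (star v ⬝ᵥ v).re = ∑ i, Complex.normSq (v i) := by
  simp only [dotProduct, Pi.star_apply, Complex.re_sum]
  refine Finset.sum_congr rfl fun i _ => ?_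
  simp [Complex.normSq_apply, Complex.mul_re]

lemma star_mulVec_dot2 {m n : ℕ} (Q : Matrix (Fin m) (Fin n) ℂ) (x y : Fin n → ℂ) :
    star x ⬝ᵥ ((Qᴴ * Q) *ᵥ y) = star (Q *ᵥ x) ⬝ᵥ (Q *ᵥ y) := by
  rw [← mulVec_mulVec, dotProduct_mulVec, ← star_mulVec]

lemma star_mulVec_dot {m n : ℕ} (Q : Matrix (Fin m) (Fin n) ℂ) (x : Fin n → ℂ) :
    star x ⬝ᵥ ((Qᴴ * Q) *ᵥ x) = star (Q *ᵥ x) ⬝ᵥ (Q *ᵥ x) :=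
  star_mulVec_dot2 Q x x

lemma quad_psd {N q : ℕ} (Q : Matrix (Fin N) (Fin q) ℂ) (x : Fin q → ℂ) :
    0 ≤ (star x ⬝ᵥ ((Qᴴ * Q) *ᵥ x)).re := by
  rw [star_mulVec_dot, star_dot_eq_sum]
  exact Finset.sum_nonneg fun i _ => Complex.normSq_nonneg _

lemma dot_self_eq_zero {n : ℕ} {w : Fin n → ℂ} (h : star w ⬝ᵥ w = 0) : w = 0 := by
  have h2 : ∑ i, Complex.normSq (w i) = 0 := by rw [← star_dot_eq_sum, h, Complex.zero_re]
  funext i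
  have := (Finset.sum_eq_zero_iff_of_nonneg
    (fun i _ => Complex.normSq_nonneg (w i))).mp h2 i (Finset.mem_univ i)
  exact Complex.normSq_eq_zero.mp this

lemma quad_decomp {q : ℕ} {A : Matrix (Fin q) (Fin q) ℂ} (hA : A.IsHermitian) (x : Fin q → ℂ) :
    star x ⬝ᵥ (A *ᵥ x) =
      star ((star (hA.eigenvectorUnitary : Matrix (Fin q) (Fin q) ℂ)) *ᵥ x) ⬝ᵥ
        ((diagonal (RCLike.ofReal ∘ hA.eigenvalues)) *ᵥ
          ((star (hA.eigenvectorUnitary : Matrix (Fin q) (Fin q) ℂ)) *ᵥ x)) := by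
  set U : Matrix (Fin q) (Fin q) ℂ := (hA.eigenvectorUnitary : Matrix (Fin q) (Fin q) ℂ)
  conv_lhs => rw [hA.spectral_theorem, Unitary.conjStarAlgAut_apply]
  rw [← mulVec_mulVec, ← mulVec_mulVec, dotProduct_mulVec]
  congr 1
  rw [star_mulVec, star_eq_conjTranspose, conjTranspose_conjTranspose]

lemma dot_diag {q : ℕ} (d : Fin q → ℝ) (y : Fin q → ℂ) :
    (star y ⬝ᵥ ((diagonal (RCLike.ofReal ∘ d)) *ᵥ y)).re = ∑ i, d i * Complex.normSq (y i) := by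
  simp only [dotProduct, mulVec_diagonal, Pi.star_apply, Complex.re_sum]
  refine Finset.sum_congr rfl fun i _ => ?_
  simp [Complex.mul_re, Complex.mul_im, Complex.normSq_apply, RCLike.ofReal]
  ring

lemma quad_re_eq_sum {q : ℕ} {A : Matrix (Fin q) (Fin q) ℂ} (hA : A.IsHermitian) (x : Fin q → ℂ) :
    (star x ⬝ᵥ (A *ᵥ x)).re = ∑ i, hA.eigenvalues i *
      Complex.normSq (((star (hA.eigenvectorUnitary : Matrix (Fin q) (Fin q) ℂ)) *ᵥ x) i) := by
  rw [quad_decomp hA x, dot_diag]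

lemma norm_preserved {q : ℕ} {A : Matrix (Fin q) (Fin q) ℂ} (hA : A.IsHermitian) (x : Fin q → ℂ) :
    ∑ i, Complex.normSq (((star (hA.eigenvectorUnitary : Matrix (Fin q) (Fin q) ℂ)) *ᵥ x) i)
      = ∑ i, Complex.normSq (x i) := by
  set U : Matrix (Fin q) (Fin q) ℂ := (hA.eigenvectorUnitary : Matrix (Fin q) (Fin q) ℂ) with hU
  have key : U * Uᴴ = 1 := by
    rw [← star_eq_conjTranspose]
    exact Matrix.mem_unitaryGroup_iff.mp hA.eigenvectorUnitary.2
  rw [← star_dot_eq_sum, ← star_dot_eq_sum]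
  have h2 : star U = Uᴴ := rfl
  rw [h2, ← star_mulVec_dot, conjTranspose_conjTranspose, key, one_mulVec]

lemma eig_nonneg {q : ℕ} {A : Matrix (Fin q) (Fin q) ℂ} (hA : A.IsHermitian)
    (h : ∀ x : Fin q → ℂ, 0 ≤ (star x ⬝ᵥ (A *ᵥ x)).re) (i : Fin q) :
    0 ≤ hA.eigenvalues i := by
  rw [hA.eigenvalues_eq]
  exact h _

lemma traceInv {q : ℕ} (V : Matrix.unitaryGroup (Fin q) ℂ) (ν : Fin q → ℝ) (hν : ∀ i, 0 ≤ ν i)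
    {A : Matrix (Fin q) (Fin q) ℂ}
    (hAeq : A = (V : Matrix (Fin q) (Fin q) ℂ) * diagonal (fun i => (ν i : ℂ))
      * star (V : Matrix (Fin q) (Fin q) ℂ)) :
    (Matrix.trace ((1 + A)⁻¹)).re = ∑ i, 1 / (1 + ν i) := by
  set W : Matrix (Fin q) (Fin q) ℂ := ↑V with hW
  have hV1 : W * star W = 1 := Matrix.mem_unitaryGroup_iff.mp V.2
  have hV2 : star W * W = 1 := Matrix.mem_unitaryGroup_iff'.mp V.2
  have hne : ∀ i, ((1:ℂ) + ν i) ≠ 0 := by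
    intro i
    have : ((1:ℂ) + ν i) = ((1 + ν i : ℝ) : ℂ) := by push_cast; ring
    rw [this]
    exact_mod_cast ne_of_gt (by linarith [hν i] : (0:ℝ) < 1 + ν i)
  have h1A : 1 + A = W * diagonal (fun i => (1:ℂ) + ν i) * star W := by
    have : diagonal (fun i => (1:ℂ) + ν i) = 1 + diagonal (fun i => (ν i : ℂ)) := by
      rw [← diagonal_one, diagonal_add]
    rw [this, mul_add, add_mul, mul_one, hV1, hAeq, hW]
  have hinv : (1 + A)⁻¹ = W * diagonal (fun i => ((1:ℂ) + ν i)⁻¹) * star W := by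
    apply Matrix.inv_eq_right_inv
    rw [h1A]
    calc W * diagonal (fun i => (1:ℂ) + ν i) * star W *
          (W * diagonal (fun i => ((1:ℂ) + ν i)⁻¹) * star W)
        = W * diagonal (fun i => (1:ℂ) + ν i) * (star W * W)
            * diagonal (fun i => ((1:ℂ) + ν i)⁻¹) * star W := by
          simp only [Matrix.mul_assoc]
      _ = W * (diagonal (fun i => (1:ℂ) + ν i) * diagonal (fun i => ((1:ℂ) + ν i)⁻¹)) * star W := by
          rw [hV2]
          simp only [Matrix.mul_assoc, Matrix.mul_one, Matrix.one_mul]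
      _ = 1 := by
          rw [diagonal_mul_diagonal]
          have : (fun i => ((1:ℂ) + ν i) * ((1:ℂ) + ν i)⁻¹) = fun _ => (1:ℂ) := by
            funext i; exact mul_inv_cancel₀ (hne i)
          rw [this, diagonal_one, Matrix.mul_one, hV1]
  rw [hinv, Matrix.trace_mul_cycle, hV2, Matrix.one_mul, trace_diagonal]
  rw [Complex.re_sum]
  refine Finset.sum_congr rfl fun i _ => ?_
  have : ((1:ℂ) + ν i)⁻¹ = (((1 + ν i : ℝ))⁻¹ : ℝ) := by push_cast; ring
  rw [this, Complex.ofReal_re, one_div]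

end Helpers

/-- The `k`-th largest eigenvalue (0-indexed: `k = 0` is the largest) of a
Hermitian matrix. -/
noncomputable def eigDesc {n : ℕ} {A : Matrix (Fin n) (Fin n) ℂ}
    (hA : A.IsHermitian) (k : Fin n) : ℝ :=
  (hA.eigenvalues ∘ Tuple.sort hA.eigenvalues) k.rev

section EigDesc

lemma eigDesc_antitone {n : ℕ} {A : Matrix (Fin n) (Fin n) ℂ} (hA : A.IsHermitian)
    {j k : Fin n} (h : j ≤ k) : eigDesc hA k ≤ eigDesc hA j :=
  Tuple.monotone_sort hA.eigenvalues (Fin.rev_le_rev.mpr h)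

lemma eigDesc_nonneg {q : ℕ} {A : Matrix (Fin q) (Fin q) ℂ} (hA : A.IsHermitian)
    (h : ∀ i, 0 ≤ hA.eigenvalues i) (k : Fin q) : 0 ≤ eigDesc hA k := h _

lemma eigDesc_eq_zero {q s : ℕ} {A : Matrix (Fin q) (Fin q) ℂ} (hA : A.IsHermitian)
    (hnn : ∀ i, 0 ≤ hA.eigenvalues i) (hrk : A.rank ≤ s) {k : Fin q} (hk : s ≤ (k : ℕ)) :
    eigDesc hA k = 0 := by
  by_contra h0
  have hpos : 0 < eigDesc hA k := lt_of_le_of_ne (eigDesc_nonneg hA hnn k) (Ne.symm h0)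
  set σ := Tuple.sort hA.eigenvalues with hσ
  have hmono := Tuple.monotone_sort hA.eigenvalues
  have hinj : Function.Injective (fun j : Set.Iic k =>
      (⟨σ j.1.rev, by
        have hj : eigDesc hA k ≤ hA.eigenvalues (σ j.1.rev) :=
          hmono (Fin.rev_le_rev.mpr j.2)
        exact ne_of_gt (lt_of_lt_of_le hpos hj)⟩ : {i // hA.eigenvalues i ≠ 0})) := by
    intro a b hab
    have := congrArg Subtype.val hab
    simp only at this
    have h2 := σ.injective this
    have h3 := Fin.rev_injective h2
    exact Subtype.ext h3
  have hcard := Fintype.card_le_of_injective _ hinj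
  rw [Fintype.card_Iic, Fin.card_Iic, ← hA.rank_eq_card_non_zero_eigs] at hcard
  omega

lemma weyl {q : ℕ} {A B : Matrix (Fin q) (Fin q) ℂ} (hA : A.IsHermitian) (hB : B.IsHermitian)
    (hAB : ∀ x : Fin q → ℂ, (star x ⬝ᵥ (A *ᵥ x)).re ≤ (star x ⬝ᵥ (B *ᵥ x)).re) (k : Fin q) :
    eigDesc hA k ≤ eigDesc hB k := by
  classical
  set UA : Matrix (Fin q) (Fin q) ℂ := (hA.eigenvectorUnitary : Matrix (Fin q) (Fin q) ℂ) with hUA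
  set UB : Matrix (Fin q) (Fin q) ℂ := (hB.eigenvectorUnitary : Matrix (Fin q) (Fin q) ℂ) with hUB
  set σA := Tuple.sort hA.eigenvalues with hσA
  set σB := Tuple.sort hB.eigenvalues with hσB
  let L : (Fin q → ℂ) →ₗ[ℂ] ((Set.Ioi k → ℂ) × (Set.Iio k → ℂ)) :=
  { toFun := fun x => (fun j => (star UA *ᵥ x) (σA j.1.rev), fun j => (star UB *ᵥ x) (σB j.1.rev)),
    map_add' := fun x y => by ext j <;> simp [Matrix.mulVec_add],
    map_smul' := fun c x => by ext j <;> simp [Matrix.mulVec_smul] }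
  have hcard : Module.finrank ℂ ((Set.Ioi k → ℂ) × (Set.Iio k → ℂ))
      < Module.finrank ℂ (Fin q → ℂ) := by
    rw [Module.finrank_prod, Module.finrank_pi, Module.finrank_pi, Module.finrank_pi,
      Fintype.card_Ioi, Fin.card_Ioi, Fintype.card_Iio, Fin.card_Iio, Fintype.card_fin]
    have := k.isLt
    omega
  have hker := LinearMap.ker_ne_bot_of_finrank_lt (f := L) hcard
  obtain ⟨x, hxker, hx0⟩ := (Submodule.ne_bot_iff _).mp hker
  have hLx : L x = 0 := LinearMap.mem_ker.mp hxker
  have hzA : ∀ j : Fin q, k < j → (star UA *ᵥ x) (σA j.rev) = 0 := fun j hj =>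
    congrFun (congrArg Prod.fst hLx) ⟨j, hj⟩
  have hzB : ∀ j : Fin q, j < k → (star UB *ᵥ x) (σB j.rev) = 0 := fun j hj =>
    congrFun (congrArg Prod.snd hLx) ⟨j, hj⟩
  set S := ∑ i, Complex.normSq (x i) with hSdef
  have hS : 0 < S := by
    obtain ⟨i, hi⟩ := Function.ne_iff.mp hx0
    have h1 : 0 < Complex.normSq (x i) := Complex.normSq_pos.mpr hi
    have h2 : ∀ i ∈ Finset.univ, (0:ℝ) ≤ Complex.normSq (x i) :=
      fun i _ => Complex.normSq_nonneg _
    exact lt_of_lt_of_le h1 (Finset.single_le_sum h2 (Finset.mem_univ i))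
  have eA : (star x ⬝ᵥ (A *ᵥ x)).re
      = ∑ j : Fin q, hA.eigenvalues (σA j.rev) * Complex.normSq ((star UA *ᵥ x) (σA j.rev)) := by
    rw [quad_re_eq_sum hA x]
    exact (Equiv.sum_comp (Fin.revPerm.trans σA)
      (fun i => hA.eigenvalues i * Complex.normSq ((star UA *ᵥ x) i))).symm
  have eB : (star x ⬝ᵥ (B *ᵥ x)).re
      = ∑ j : Fin q, hB.eigenvalues (σB j.rev) * Complex.normSq ((star UB *ᵥ x) (σB j.rev)) := by
    rw [quad_re_eq_sum hB x]
    exact (Equiv.sum_comp (Fin.revPerm.trans σB)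
      (fun i => hB.eigenvalues i * Complex.normSq ((star UB *ᵥ x) i))).symm
  have sA : ∑ j : Fin q, Complex.normSq ((star UA *ᵥ x) (σA j.rev)) = S := by
    rw [hSdef, ← norm_preserved hA x, ← hUA]
    exact Equiv.sum_comp (Fin.revPerm.trans σA) (fun i => Complex.normSq ((star UA *ᵥ x) i))
  have sB : ∑ j : Fin q, Complex.normSq ((star UB *ᵥ x) (σB j.rev)) = S := by
    rw [hSdef, ← norm_preserved hB x, ← hUB]
    exact Equiv.sum_comp (Fin.revPerm.trans σB) (fun i => Complex.normSq ((star UB *ᵥ x) i))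
  have bA : eigDesc hA k * S ≤ (star x ⬝ᵥ (A *ᵥ x)).re := by
    rw [eA, ← sA, Finset.mul_sum]
    refine Finset.sum_le_sum fun j _ => ?_
    by_cases hj : k < j
    · rw [hzA j hj]; simp
    · push_neg at hj
      exact mul_le_mul_of_nonneg_right (eigDesc_antitone hA hj) (Complex.normSq_nonneg _)
  have bB : (star x ⬝ᵥ (B *ᵥ x)).re ≤ eigDesc hB k * S := by
    rw [eB, ← sB, Finset.mul_sum]
    refine Finset.sum_le_sum fun j _ => ?_
    by_cases hj : j < k
    · rw [hzB j hj]; simp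
    · push_neg at hj
      exact mul_le_mul_of_nonneg_right (eigDesc_antitone hB hj) (Complex.normSq_nonneg _)
  have := le_trans bA (le_trans (hAB x) bB)
  exact le_of_mul_le_mul_right this hS

end EigDesc

section Sums

lemma sum_fin_split {q : ℕ} (m : ℕ) (hm : m ≤ q) (g : Fin q → ℝ) :
    ∑ j : Fin q, g j
      = (∑ x ∈ Finset.range m, if h : x < q then g ⟨x, h⟩ else 0)
        + ∑ x ∈ Finset.Ico m q, if h : x < q then g ⟨x, h⟩ else 0 := by
  have h1 : ∑ j : Fin q, g j = ∑ x ∈ Finset.range q, (if h : x < q then g ⟨x, h⟩ else 0) := by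
    rw [← Fin.sum_univ_eq_sum_range]
    exact Finset.sum_congr rfl fun j _ => by rw [dif_pos j.isLt]
  rw [h1, Finset.range_eq_Ico, ← Finset.sum_Ico_consecutive _ (Nat.zero_le m) hm,
    ← Finset.range_eq_Ico]

lemma sum_castLE {q m : ℕ} (hm : m ≤ q) (g : Fin q → ℝ) :
    ∑ k : Fin m, g (Fin.castLE hm k)
      = ∑ x ∈ Finset.range m, if h : x < q then g ⟨x, h⟩ else 0 := by
  rw [← Fin.sum_univ_eq_sum_range]
  refine Finset.sum_congr rfl fun k _ => ?_
  rw [dif_pos (lt_of_lt_of_le k.isLt hm)]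
  rfl

lemma max_eq_card {q s : ℕ} : max ((q : ℝ) - s) 0 = ((q - min s q : ℕ) : ℝ) := by
  rcases le_total s q with h | h
  · rw [min_eq_left h, max_eq_left (by
      have : (s:ℝ) ≤ q := Nat.cast_le.mpr h
      linarith), Nat.cast_sub h]
  · rw [min_eq_right h, Nat.sub_self, max_eq_right (by
      have : (q:ℝ) ≤ s := Nat.cast_le.mpr h
      linarith)]
    simp

end Sums
set_option maxHeartbeats 1000000 in
lemma exists_P {N q : ℕ} (C : Matrix (Fin N) (Fin q) ℂ) (s : ℕ) (hC : (Cᴴ * C).IsHermitian) :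
    ∃ P : Matrix (Fin N) (Fin N) ℂ, Pᴴ = P ∧ P * P = P ∧ P.rank ≤ s ∧
      (Matrix.trace ((1 + Cᴴ * P * C)⁻¹)).re = ∑ j : Fin q, 1 /
        (1 + (if (((Tuple.sort hC.eigenvalues).symm j).rev : ℕ) < min s q
          then hC.eigenvalues j else 0)) := by
  classical
  set m := min s q with hm
  set lam := hC.eigenvalues with hlam
  set σ := Tuple.sort hC.eigenvalues with hσ
  have hlnn : ∀ i, 0 ≤ lam i := eig_nonneg hC (fun x => quad_psd C x)
  set v : Fin q → (Fin q → ℂ) := fun i => ⇑(hC.eigenvectorBasis i) with hv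
  have hvv : ∀ i i', star (v i) ⬝ᵥ v i' = if i = i' then 1 else 0 := by
    intro i i'
    rw [dotProduct_comm]
    exact orthonormal_iff_ite.mp hC.eigenvectorBasis.orthonormal i i'
  have hCvCv : ∀ i i', star (C *ᵥ v i) ⬝ᵥ (C *ᵥ v i') = if i = i' then (lam i' : ℂ) else 0 := by
    intro i i'
    rw [← star_mulVec_dot2, hC.mulVec_eigenvectorBasis i']
    rw [dotProduct_smul, hvv i i']
    by_cases h : i = i' <;> simp [h, Complex.real_smul, hlam]
  have hCv0 : ∀ i, lam i = 0 → C *ᵥ v i = 0 := by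
    intro i hi
    apply dot_self_eq_zero
    rw [hCvCv i i, if_pos rfl, hi, Complex.ofReal_zero]
  set T : Finset (Fin q) :=
    Finset.univ.filter (fun i => ((σ.symm i).rev : ℕ) < m ∧ lam i ≠ 0) with hT
  set u : Fin q → (Fin N → ℂ) :=
    fun i => (((Real.sqrt (lam i))⁻¹ : ℝ) : ℂ) • (C *ᵥ v i) with hu
  have hsqrt : ∀ i ∈ T, Real.sqrt (lam i) ≠ 0 := by
    intro i hi
    rw [hT, Finset.mem_filter] at hi
    exact Real.sqrt_ne_zero'.mpr (lt_of_le_of_ne (hlnn i) (Ne.symm hi.2.2))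
  have huu : ∀ i ∈ T, ∀ i' ∈ T, star (u i) ⬝ᵥ u i' = if i = i' then 1 else 0 := by
    intro i hi i' hi'
    rw [hu]
    simp only [star_smul, smul_dotProduct, dotProduct_smul, star_trivial, RCLike.star_def,
      Complex.conj_ofReal, hCvCv i i']
    by_cases h : i = i'
    · subst h
      rw [if_pos rfl, if_pos rfl]
      rw [smul_eq_mul, smul_eq_mul, ← Complex.ofReal_mul, ← Complex.ofReal_mul]
      norm_cast
      rw [← Real.mul_self_sqrt (hlnn i)]
      field_simp
      rw [Real.sqrt_sq (Real.sqrt_nonneg _)]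
      exact div_self (pow_ne_zero 2 (hsqrt i hi))
    · rw [if_neg h, if_neg h]
      simp
  set M : Matrix (Fin N) {i // i ∈ T} ℂ := Matrix.of (fun n i => u i.1 n) with hM
  set P : Matrix (Fin N) (Fin N) ℂ := M * Mᴴ with hP
  have hMM : Mᴴ * M = 1 := by
    ext i i'
    rw [mul_apply, one_apply]
    have : ∑ n, (Mᴴ) i n * M n i' = star (u i.1) ⬝ᵥ u i'.1 := by
      simp [dotProduct, conjTranspose_apply, hM]
    rw [this, huu i.1 i.2 i'.1 i'.2]
    by_cases h : i = i'
    · simp [h]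
    · rw [if_neg h, if_neg (fun hc => h (Subtype.ext hc))]
  have hPH : Pᴴ = P := by
    rw [hP, conjTranspose_mul, conjTranspose_conjTranspose]
  have hPP : P * P = P := by
    rw [hP, Matrix.mul_assoc, ← Matrix.mul_assoc Mᴴ M Mᴴ, hMM, Matrix.one_mul]
  have hrank : P.rank ≤ s := by
    have h1 : P.rank ≤ M.rank := by rw [hP]; exact rank_mul_le_left M Mᴴ
    have h2 : M.rank ≤ Fintype.card {i // i ∈ T} := rank_le_card_width M
    have h3 : Fintype.card {i // i ∈ T} = T.card := Fintype.card_coe T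
    have h4 : T.card ≤ m := by
      have : T.card ≤ (Finset.range m).card := by
        apply Finset.card_le_card_of_injOn (fun i => ((σ.symm i).rev : ℕ))
        · intro i hi
          rw [hT, Finset.mem_coe, Finset.mem_filter] at hi
          exact Finset.mem_range.mpr hi.2.1
        · intro a _ b _ hab
          have h5 : (σ.symm a).rev = (σ.symm b).rev := Fin.val_injective hab
          have h6 := Fin.rev_injective h5
          exact σ.symm.injective h6
      simpa using this
    omega
  -- the matrix V and E
  set V : Matrix (Fin q) (Fin q) ℂ := (hC.eigenvectorUnitary : Matrix (Fin q) (Fin q) ℂ) with hV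
  have hV1 : V * star V = 1 := Matrix.mem_unitaryGroup_iff.mp hC.eigenvectorUnitary.2
  set E : Matrix {i // i ∈ T} (Fin q) ℂ :=
    Matrix.of (fun i j => if i.1 = j then ((Real.sqrt (lam j) : ℝ) : ℂ) else 0) with hE
  set G : Matrix {i // i ∈ T} (Fin q) ℂ := Mᴴ * C with hG
  have hGV : G * V = E := by
    ext i j
    have h1 : (G * V) i j = star (u i.1) ⬝ᵥ (C *ᵥ v j) := by
      rw [hG, Matrix.mul_assoc, mul_apply]
      simp only [dotProduct, conjTranspose_apply, hM, Matrix.of_apply, mul_apply, mulVec,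
        dotProduct, Pi.star_apply]
      congr 1
    rw [h1, hu]
    simp only [star_smul, smul_dotProduct, star_trivial, RCLike.star_def, Complex.conj_ofReal,
      hCvCv i.1 j]
    by_cases h : i.1 = j
    · rw [if_pos h, hE, Matrix.of_apply, if_pos h, smul_eq_mul, ← Complex.ofReal_mul]
      subst h
      congr 1
      have hs := hsqrt i.1 i.2
      rw [← Real.mul_self_sqrt (hlnn i.1)]
      field_simp
      rw [Real.sqrt_sq (Real.sqrt_nonneg _)]
    · rw [if_neg h, hE, Matrix.of_apply, if_neg h, smul_zero]
  have hGE : G = E * star V := by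
    rw [← hGV, Matrix.mul_assoc, hV1, Matrix.mul_one]
  set ν : Fin q → ℝ := fun j => if j ∈ T then lam j else 0 with hν
  have hEE : Eᴴ * E = diagonal (fun j => (ν j : ℂ)) := by
    ext j j'
    rw [mul_apply, diagonal_apply]
    by_cases h : j = j'
    · subst h
      rw [if_pos rfl]
      have h1 : ∀ i : {i // i ∈ T}, (Eᴴ) j i * E i j
          = if i.1 = j then ((lam j : ℝ) : ℂ) else 0 := by
        intro i
        by_cases h2 : i.1 = j
        · simp [hE, conjTranspose_apply, h2, Complex.conj_ofReal, ← Complex.ofReal_mul,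
            Real.mul_self_sqrt (hlnn j)]
        · simp [hE, conjTranspose_apply, h2]
      rw [Finset.sum_congr rfl (fun i _ => h1 i)]
      simp only [hν]
      by_cases hjT : j ∈ T
      · rw [if_pos hjT, Finset.sum_eq_single (⟨j, hjT⟩ : {i // i ∈ T})]
        · simp
        · intro b _ hb
          rw [if_neg (fun hc => hb (Subtype.ext hc))]
        · intro hj2
          exact absurd (Finset.mem_univ _) hj2
      · rw [if_neg hjT, Complex.ofReal_zero]
        apply Finset.sum_eq_zero
        intro i _
        rw [if_neg (fun hc : i.1 = j => hjT (hc ▸ i.2))]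
    · rw [if_neg h]
      apply Finset.sum_eq_zero
      intro i _
      by_cases h2 : i.1 = j
      · have h3 : ¬ i.1 = j' := fun hc => h (h2 ▸ hc ▸ rfl)
        simp only [hE, conjTranspose_apply, Matrix.of_apply, if_pos h2, if_neg h3, mul_zero]
      · simp [hE, conjTranspose_apply, h2]
  have hAeq : Cᴴ * P * C = V * diagonal (fun j => (ν j : ℂ)) * star V := by
    have h1 : Cᴴ * P * C = Gᴴ * G := by
      rw [hG, hP, conjTranspose_mul, conjTranspose_conjTranspose]
      simp only [Matrix.mul_assoc]
    have h2 : (E * star V)ᴴ = V * Eᴴ := by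
      rw [conjTranspose_mul, star_eq_conjTranspose, conjTranspose_conjTranspose]
    rw [h1, hGE, h2, Matrix.mul_assoc, ← Matrix.mul_assoc Eᴴ E (star V), hEE,
      ← Matrix.mul_assoc]
  have hνnn : ∀ j, 0 ≤ ν j := by
    intro j; rw [hν]
    by_cases h : j ∈ T <;> simp [h, hlnn j]
  refine ⟨P, hPH, hPP, hrank, ?_⟩
  rw [traceInv hC.eigenvectorUnitary ν hνnn hAeq]
  refine Finset.sum_congr rfl fun j _ => ?_
  congr 1
  congr 1
  simp only [hν, hT]
  by_cases h0 : lam j = 0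
  · simp [h0]
  · simp only [Finset.mem_filter, Finset.mem_univ, true_and]
    by_cases h1 : ((σ.symm j).rev : ℕ) < m
    · rw [if_pos ⟨h1, h0⟩, if_pos h1]
    · rw [if_neg (fun hc => h1 hc.1), if_neg h1]

set_option maxHeartbeats 1000000 in
/-- The minimum of the noiseless-fusion-center MSE `Tr[(I_q + Cᴴ P C)⁻¹]` over
all orthogonal projections `P` of rank at most `s` (the number of RF chains)
equals `max(q − s, 0) + Σ_{k=1}^{min(s,q)} 1/(1 + λ_k(Cᴴ C))`; in particular,
taking `s` beyond the parameter dimension `q` yields no further reduction. -/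
theorem stmt4 {N q : ℕ} (C : Matrix (Fin N) (Fin q) ℂ) (s : ℕ)
    (hC : (Cᴴ * C).IsHermitian) :
    IsLeast
      {x : ℝ | ∃ P : Matrix (Fin N) (Fin N) ℂ,
        Pᴴ = P ∧ P * P = P ∧ P.rank ≤ s ∧
        x = (Matrix.trace ((1 + Cᴴ * P * C)⁻¹)).re}
      (max ((q : ℝ) - s) 0 +
        ∑ k : Fin (min s q), 1 / (1 + eigDesc hC (Fin.castLE (min_le_right s q) k))) := by
  classical
  have hmq : min s q ≤ q := min_le_right s q
  constructor
  · -- membership : the optimal projection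
    obtain ⟨P, hPH, hPP, hrank, htr⟩ := exists_P C s hC
    refine ⟨P, hPH, hPP, hrank, ?_⟩
    rw [htr]
    -- reindex the sum by descending eigenvalue order
    have hre : ∑ j : Fin q, (1:ℝ) /
          (1 + (if (((Tuple.sort hC.eigenvalues).symm j).rev : ℕ) < min s q
            then hC.eigenvalues j else 0))
        = ∑ j : Fin q, (if (j : ℕ) < min s q then 1 / (1 + eigDesc hC j) else 1) := by
      rw [← Equiv.sum_comp (Fin.revPerm.trans (Tuple.sort hC.eigenvalues))
        (fun j => (1:ℝ) / (1 + (if (((Tuple.sort hC.eigenvalues).symm j).rev : ℕ) < min s q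
            then hC.eigenvalues j else 0)))]
      refine Finset.sum_congr rfl fun j _ => ?_
      have h1 : ((Fin.revPerm.trans (Tuple.sort hC.eigenvalues)) j)
          = (Tuple.sort hC.eigenvalues) j.rev := rfl
      rw [h1, Equiv.symm_apply_apply, Fin.rev_rev]
      by_cases h2 : (j : ℕ) < min s q
      · rw [if_pos h2, if_pos h2]; rfl
      · rw [if_neg h2, if_neg h2, add_zero, div_one]
    rw [hre, sum_fin_split (min s q) hmq, max_eq_card,
      sum_castLE hmq (fun j => 1 / (1 + eigDesc hC j))]
    have hr1 : ∑ x ∈ Finset.range (min s q),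
          (if h : x < q then (if x < min s q then 1 / (1 + eigDesc hC ⟨x, h⟩) else 1) else 0)
        = ∑ x ∈ Finset.range (min s q),
          (if h : x < q then 1 / (1 + eigDesc hC ⟨x, h⟩) else 0) := by
      refine Finset.sum_congr rfl fun x hx => ?_
      have hxm := Finset.mem_range.mp hx
      rw [dif_pos (lt_of_lt_of_le hxm hmq), dif_pos (lt_of_lt_of_le hxm hmq), if_pos hxm]
    have hr2 : ∑ x ∈ Finset.Ico (min s q) q,
          (if h : x < q then (if x < min s q then 1 / (1 + eigDesc hC ⟨x, h⟩) else 1) else 0)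
        = ((q - min s q : ℕ) : ℝ) := by
      rw [Finset.sum_congr rfl (fun x hx => ?_), Finset.sum_const, Nat.card_Ico,
        nsmul_eq_mul, mul_one]
      have hx2 := Finset.mem_Ico.mp hx
      rw [dif_pos hx2.2, if_neg (by omega)]
    rw [hr1, hr2]
    ring
  · -- lower bound
    rintro x ⟨P, hPH, hPP, hrk, rfl⟩
    set A : Matrix (Fin q) (Fin q) ℂ := Cᴴ * P * C with hA
    have hfact : (P * C)ᴴ * (P * C) = A := by
      rw [conjTranspose_mul, hPH, Matrix.mul_assoc, ← Matrix.mul_assoc P P C, hPP, hA,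
        Matrix.mul_assoc]
    have hAH : A.IsHermitian := by
      rw [← hfact]
      exact isHermitian_conjTranspose_mul_self (P * C)
    have hpsdA : ∀ y : Fin q → ℂ, 0 ≤ (star y ⬝ᵥ (A *ᵥ y)).re := by
      intro y
      rw [← hfact]
      exact quad_psd (P * C) y
    have hfact2 : ((1 - P) * C)ᴴ * ((1 - P) * C) = Cᴴ * C - A := by
      have h1P : (1 - P)ᴴ = 1 - P := by rw [conjTranspose_sub, conjTranspose_one, hPH]
      have h2P : (1 - P) * (1 - P) = 1 - P := by
        rw [sub_mul, one_mul, mul_sub, mul_one, hPP]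
        simp
      rw [conjTranspose_mul, h1P, Matrix.mul_assoc, ← Matrix.mul_assoc (1 - P) (1 - P) C, h2P,
        ← Matrix.mul_assoc, Matrix.mul_sub, Matrix.sub_mul, Matrix.mul_one, ← hA]
    have hABq : ∀ y : Fin q → ℂ,
        (star y ⬝ᵥ (A *ᵥ y)).re ≤ (star y ⬝ᵥ ((Cᴴ * C) *ᵥ y)).re := by
      intro y
      have h0 : 0 ≤ (star y ⬝ᵥ ((Cᴴ * C - A) *ᵥ y)).re := by
        rw [← hfact2]
        exact quad_psd ((1 - P) * C) y
      rw [Matrix.sub_mulVec, dotProduct_sub, Complex.sub_re] at h0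
      linarith
    have hAnn : ∀ i, 0 ≤ hAH.eigenvalues i := eig_nonneg hAH hpsdA
    have hrankA : A.rank ≤ s := by
      have h1 : A.rank ≤ (Cᴴ * P).rank := rank_mul_le_left (Cᴴ * P) C
      have h2 : (Cᴴ * P).rank ≤ P.rank := rank_mul_le_right Cᴴ P
      omega
    -- the trace as a sum over eigenvalues
    have hdg : diagonal (RCLike.ofReal ∘ hAH.eigenvalues)
        = diagonal (fun i => (hAH.eigenvalues i : ℂ)) := rfl
    have hAeq := hAH.spectral_theorem
    rw [hdg] at hAeq
    rw [traceInv hAH.eigenvectorUnitary hAH.eigenvalues hAnn hAeq]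
    have hre2 : ∑ i, 1 / (1 + hAH.eigenvalues i)
        = ∑ j : Fin q, 1 / (1 + eigDesc hAH j) :=
      (Equiv.sum_comp (Fin.revPerm.trans (Tuple.sort hAH.eigenvalues))
        (fun i => 1 / (1 + hAH.eigenvalues i))).symm
    rw [hre2, sum_fin_split (min s q) hmq, max_eq_card,
      sum_castLE hmq (fun j => 1 / (1 + eigDesc hC j))]
    have hb1 : ∑ x ∈ Finset.range (min s q),
          (if h : x < q then 1 / (1 + eigDesc hC ⟨x, h⟩) else 0)
        ≤ ∑ x ∈ Finset.range (min s q),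
          (if h : x < q then 1 / (1 + eigDesc hAH ⟨x, h⟩) else 0) := by
      refine Finset.sum_le_sum fun x hx => ?_
      have hxq := lt_of_lt_of_le (Finset.mem_range.mp hx) hmq
      rw [dif_pos hxq, dif_pos hxq]
      have hw := weyl hAH hC hABq ⟨x, hxq⟩
      have hnn := eigDesc_nonneg hAH hAnn ⟨x, hxq⟩
      apply one_div_le_one_div_of_le <;> linarith
    have hb2 : ((q - min s q : ℕ) : ℝ)
        = ∑ x ∈ Finset.Ico (min s q) q,
          (if h : x < q then 1 / (1 + eigDesc hAH ⟨x, h⟩) else 0) := by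
      rw [Finset.sum_congr rfl (fun x hx => ?_), Finset.sum_const, Nat.card_Ico,
        nsmul_eq_mul, mul_one]
      have hx2 := Finset.mem_Ico.mp hx
      rw [dif_pos hx2.2]
      have hsx : s ≤ x := by
        rcases le_total s q with h | h
        · have := min_eq_left h; omega
        · have := min_eq_right h; omega
      rw [eigDesc_eq_zero hAH hAnn hrankA (k := ⟨x, hx2.2⟩) hsx]
      norm_num
    rw [hb2, add_comm]
    exact add_le_add hb1 le_rfl
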